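/- arXiv:1405.0851 — 4 statements merged into one kernel-verified Lean document; each statement's English description precedes it below -/
import Mathlib

section
/- Let f : ℝ → ℝ be a differentiable function such that 4·s·(f′(s))² < 1 for every s ≥ 0. Then there is at most one real number c with c = f(c²); that is, if c = f(c²) and d = f(d²), then c = d. -/
theorem elliptic_fixed_point_unique
    (f : ℝ → ℝ) (hf : Differentiable ℝ f)
    (hell : ∀ s : ℝ, 0 ≤ s → 4 * s * (deriv f s) ^ 2 < 1)
    (c d : ℝ) (hc : c = f (c ^ 2)) (hd : d = f (d ^ 2)) :
    c = d := by
  set g : ℝ → ℝ := fun t => f (t ^ 2) - t with hg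
  have hderiv : ∀ t : ℝ, HasDerivAt g (deriv f (t ^ 2) * (2 * t) - 1) t := by
    intro t
    have h1 : HasDerivAt (fun t : ℝ => t ^ 2) (2 * t) t := by
      simpa using hasDerivAt_pow 2 t
    have h2 := ((hf (t ^ 2)).hasDerivAt.comp t h1)
    exact h2.sub (hasDerivAt_id t)
  have hneg : ∀ t : ℝ, deriv g t < 0 := by
    intro t
    rw [(hderiv t).deriv]
    have h := hell (t ^ 2) (sq_nonneg t)
    have hsq : (deriv f (t ^ 2) * (2 * t)) ^ 2 < 1 := by nlinarith [sq_nonneg (deriv f (t^2) * t)]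
    nlinarith [sq_nonneg (deriv f (t ^ 2) * (2 * t) - 1), sq_nonneg (deriv f (t ^ 2) * (2 * t))]
  have hanti : StrictAnti g := by
    exact strictAnti_of_deriv_neg hneg
  have : g c = g d := by simp [hg, ← hc, ← hd]
  exact hanti.injective this
end

section
/- Let f : ℝ → ℝ be differentiable on (0, ∞) with 4·t·(f′(t))² < 1 for all t > 0, and suppose there exists t₀ > 0 with f(t₀) = √t₀. Then: (i) for every t > t₀ one has 2√t₀ − √t < f(t) < √t, and (ii) for every t with 0 < t < t₀ one has f(t) > √t. -/
theorem elliptic_bounds_from_crossing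
    (f : ℝ → ℝ)
    (hf : ∀ t : ℝ, 0 < t → DifferentiableAt ℝ f t)
    (hell : ∀ t : ℝ, 0 < t → 4 * t * (deriv f t) ^ 2 < 1)
    (t₀ : ℝ) (ht₀ : 0 < t₀) (hcross : f t₀ = Real.sqrt t₀) :
    (∀ t : ℝ, t₀ < t →
        2 * Real.sqrt t₀ - Real.sqrt t < f t ∧ f t < Real.sqrt t) ∧
      (∀ t : ℝ, 0 < t → t < t₀ → Real.sqrt t < f t) := by
  have key : ∀ t : ℝ, 0 < t → |deriv f t| < 1 / (2 * Real.sqrt t) := by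
    intro t ht
    have hs : 0 < Real.sqrt t := Real.sqrt_pos.mpr ht
    have hsq : Real.sqrt t ^ 2 = t := Real.sq_sqrt ht.le
    have h1 := hell t ht
    rw [abs_lt]
    constructor
    · rw [neg_lt, lt_div_iff₀ (by positivity : (0:ℝ) < 2 * Real.sqrt t)]
      nlinarith [sq_nonneg (2 * Real.sqrt t * deriv f t + 1)]
    · rw [lt_div_iff₀ (by positivity : (0:ℝ) < 2 * Real.sqrt t)]
      nlinarith [sq_nonneg (2 * Real.sqrt t * deriv f t - 1)]
  have hGanti : StrictAntiOn (fun t => f t - Real.sqrt t) (Set.Ioi (0:ℝ)) := by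
    apply strictAntiOn_of_deriv_neg (convex_Ioi 0)
    · exact fun x hx => ((hf x hx).sub
        (Real.hasDerivAt_sqrt (ne_of_gt hx)).differentiableAt).continuousAt.continuousWithinAt
    · intro x hx
      rw [interior_Ioi] at hx
      have hds : HasDerivAt Real.sqrt (1 / (2 * Real.sqrt x)) x :=
        Real.hasDerivAt_sqrt (ne_of_gt hx)
      have hd : deriv (fun t => f t - Real.sqrt t) x = deriv f x - 1 / (2 * Real.sqrt x) := by
        rw [deriv_fun_sub (hf x hx) hds.differentiableAt, hds.deriv]
      rw [hd]
      have := (abs_lt.mp (key x hx)).2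
      linarith [le_abs_self (deriv f x)]
  have hHmono : StrictMonoOn (fun t => f t + Real.sqrt t) (Set.Ioi (0:ℝ)) := by
    apply strictMonoOn_of_deriv_pos (convex_Ioi 0)
    · exact fun x hx => ((hf x hx).add
        (Real.hasDerivAt_sqrt (ne_of_gt hx)).differentiableAt).continuousAt.continuousWithinAt
    · intro x hx
      rw [interior_Ioi] at hx
      have hds : HasDerivAt Real.sqrt (1 / (2 * Real.sqrt x)) x :=
        Real.hasDerivAt_sqrt (ne_of_gt hx)
      have hd : deriv (fun t => f t + Real.sqrt t) x = deriv f x + 1 / (2 * Real.sqrt x) := by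
        rw [deriv_fun_add (hf x hx) hds.differentiableAt, hds.deriv]
      rw [hd]
      have := (abs_lt.mp (key x hx)).1
      linarith [neg_abs_le (deriv f x)]
  have ht₀mem : t₀ ∈ Set.Ioi (0:ℝ) := ht₀
  constructor
  · intro t ht
    have htmem : t ∈ Set.Ioi (0:ℝ) := lt_trans ht₀ ht
    have h1 := hGanti ht₀mem htmem ht
    have h2 := hHmono ht₀mem htmem ht
    simp only at h1 h2
    constructor <;> [skip; skip] <;> nlinarith [h1, h2, hcross]
  · intro t ht htlt
    have htmem : t ∈ Set.Ioi (0:ℝ) := ht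
    have h1 := hGanti htmem ht₀mem htlt
    simp only at h1
    nlinarith [h1, hcross]
end

section
/- Let f : ℝ → ℝ be differentiable on (0, ∞) with 4·t·(f′(t))² < 1 for all t > 0, and suppose there exists t₀ > 0 with f(t₀) = √t₀. Then for every t > 0 with f(t) ≤ √t one has t ≥ t₀ and f(t) + √t ≥ 2√t₀. -/
theorem elliptic_larger_principal_curvature_bound
    (f : ℝ → ℝ)
    (hf : ∀ t : ℝ, 0 < t → DifferentiableAt ℝ f t)
    (hell : ∀ t : ℝ, 0 < t → 4 * t * (deriv f t) ^ 2 < 1)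
    (t₀ : ℝ) (ht₀ : 0 < t₀) (hcross : f t₀ = Real.sqrt t₀) :
    ∀ t : ℝ, 0 < t → f t ≤ Real.sqrt t →
      t₀ ≤ t ∧ 2 * Real.sqrt t₀ ≤ f t + Real.sqrt t := by
  -- key estimate on the derivative
  have key : ∀ t : ℝ, 0 < t → |deriv f t| < 1 / (2 * Real.sqrt t) := by
    intro t ht
    have hs : 0 < Real.sqrt t := Real.sqrt_pos.mpr ht
    have hst : Real.sqrt t * Real.sqrt t = t := Real.mul_self_sqrt ht.le
    have h4 := hell t ht
    rw [abs_lt]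
    constructor
    · rw [neg_lt, lt_div_iff₀ (by positivity)]
      nlinarith [sq_nonneg (2 * Real.sqrt t * deriv f t + 1)]
    · rw [lt_div_iff₀ (by positivity)]
      nlinarith [sq_nonneg (2 * Real.sqrt t * deriv f t - 1)]
  have hsqrt_diff : ∀ t : ℝ, 0 < t → HasDerivAt Real.sqrt (1 / (2 * Real.sqrt t)) t :=
    fun t ht => Real.hasDerivAt_sqrt (ne_of_gt ht)
  -- g = √ - f strictly increasing on Ioi 0
  have hgmono : StrictMonoOn (fun t => Real.sqrt t - f t) (Set.Ioi 0) := by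
    apply StrictMonoOn.mono (s := Set.Ioi (0:ℝ)) ?_ le_rfl
    apply strictMonoOn_of_deriv_pos (convex_Ioi 0)
    · apply ContinuousOn.sub
      · exact Real.continuous_sqrt.continuousOn
      · exact fun x hx => ((hf x hx).continuousAt).continuousWithinAt
    · intro x hx
      rw [interior_Ioi] at hx
      have hx' : (0:ℝ) < x := hx
      have hd : deriv (fun t => Real.sqrt t - f t) x
          = 1 / (2 * Real.sqrt x) - deriv f x := by
        rw [deriv_fun_sub ((hsqrt_diff x hx').differentiableAt) (hf x hx'),
          (hsqrt_diff x hx').deriv]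
      rw [hd]
      have := key x hx'
      rw [abs_lt] at this
      linarith [this.2]
  -- h = f + √ strictly increasing on Ioi 0
  have hhmono : StrictMonoOn (fun t => f t + Real.sqrt t) (Set.Ioi 0) := by
    apply strictMonoOn_of_deriv_pos (convex_Ioi 0)
    · apply ContinuousOn.add
      · exact fun x hx => ((hf x hx).continuousAt).continuousWithinAt
      · exact Real.continuous_sqrt.continuousOn
    · intro x hx
      rw [interior_Ioi] at hx
      have hx' : (0:ℝ) < x := hx
      have hd : deriv (fun t => f t + Real.sqrt t) x
          = deriv f x + 1 / (2 * Real.sqrt x) := by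
        rw [deriv_fun_add (hf x hx') ((hsqrt_diff x hx').differentiableAt),
          (hsqrt_diff x hx').deriv]
      rw [hd]
      have := key x hx'
      rw [abs_lt] at this
      linarith [this.1]
  intro t ht hft
  have ht0le : t₀ ≤ t := by
    by_contra h
    push_neg at h
    have := hgmono (Set.mem_Ioi.mpr ht) (Set.mem_Ioi.mpr ht₀) h
    simp only [hcross, sub_self] at this
    linarith
  refine ⟨ht0le, ?_⟩
  have := hhmono.monotoneOn (Set.mem_Ioi.mpr ht₀) (Set.mem_Ioi.mpr ht) ht0le
  simp only [hcross] at this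
  linarith
end

section
/- Let v₀ be a nonzero vector in Euclidean space ℝ³ and let (Cₙ) be a sequence of nonempty compact subsets of ℝ³ with diam(Cₙ) → 0, such that the cylinders Rₙ = {c + t·v₀ : c ∈ Cₙ, t ∈ ℝ} are nested, i.e. Rₙ₊₁ ⊆ Rₙ for all n. Then there exists x₀ ∈ ℝ³ such that, setting L = {x₀ + t·v₀ : t ∈ ℝ}, for every n and every point x ∈ Rₙ the distance from x to L satisfies dist(x, L) ≤ diam(Cₙ). -/
open Filter Topology

theorem nested_cylinders_distance_to_line
    (v₀ : EuclideanSpace ℝ (Fin 3)) (hv₀ : v₀ ≠ 0)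
    (C : ℕ → Set (EuclideanSpace ℝ (Fin 3)))
    (hne : ∀ n, (C n).Nonempty)
    (hcpt : ∀ n, IsCompact (C n))
    (hdiam : Tendsto (fun n => Metric.diam (C n)) atTop (𝓝 0))
    (R : ℕ → Set (EuclideanSpace ℝ (Fin 3)))
    (hR : ∀ n, R n = {x | ∃ c ∈ C n, ∃ t : ℝ, x = c + t • v₀})
    (hnested : ∀ n, R (n + 1) ⊆ R n) :
    ∃ x₀ : EuclideanSpace ℝ (Fin 3),
      ∀ n, ∀ x ∈ R n,
        Metric.infDist x {y | ∃ t : ℝ, y = x₀ + t • v₀} ≤ Metric.diam (C n) := by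
  have hvn : (0:ℝ) < ‖v₀‖ := norm_pos_iff.mpr hv₀
  have hv2 : (0:ℝ) < ‖v₀‖ ^ 2 := by positivity
  set Q : EuclideanSpace ℝ (Fin 3) → EuclideanSpace ℝ (Fin 3) :=
    fun x => x - ((inner ℝ v₀ x : ℝ) / ‖v₀‖ ^ 2) • v₀ with hQ
  have hQv : ∀ x (t : ℝ), Q (x + t • v₀) = Q x := by
    intro x t
    simp only [hQ, inner_add_right, inner_smul_right, real_inner_self_eq_norm_sq]
    rw [add_div, mul_div_assoc, div_self hv2.ne', mul_one, add_smul]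
    abel
  have hQsub : ∀ x y, Q x - Q y = Q (x - y) := by
    intro x y
    simp only [hQ, inner_sub_right, sub_div, sub_smul]
    abel
  have hQnorm : ∀ u, ‖Q u‖ ≤ ‖u‖ := by
    intro u
    have horth : (inner ℝ (Q u) (((inner ℝ v₀ u : ℝ) / ‖v₀‖ ^ 2) • v₀) : ℝ) = 0 := by
      simp only [hQ, inner_smul_right, inner_sub_left, real_inner_smul_left]
      rw [real_inner_self_eq_norm_sq, real_inner_comm v₀ u]
      field_simp
      ring
    have hdecomp : u = Q u + ((inner ℝ v₀ u : ℝ) / ‖v₀‖ ^ 2) • v₀ := by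
      simp [hQ]
    have hsq : ‖u‖ ^ 2 = ‖Q u‖ ^ 2 + ‖((inner ℝ v₀ u : ℝ) / ‖v₀‖ ^ 2) • v₀‖ ^ 2 := by
      conv_lhs => rw [hdecomp]
      rw [norm_add_sq_real, horth]
      ring
    nlinarith [norm_nonneg u, norm_nonneg (Q u),
      sq_nonneg ‖((inner ℝ v₀ u : ℝ) / ‖v₀‖ ^ 2) • v₀‖]
  have hQcont : Continuous Q := by
    apply continuous_id.sub
    fun_prop
  set K : ℕ → Set (EuclideanSpace ℝ (Fin 3)) := fun n => Q '' C n with hK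
  have hKcpt : ∀ n, IsCompact (K n) := fun n => (hcpt n).image hQcont
  have hKne : ∀ n, (K n).Nonempty := fun n => (hne n).image Q
  have hKnested : ∀ n, K (n + 1) ⊆ K n := by
    intro n z hz
    obtain ⟨c, hc, rfl⟩ := hz
    have hcR : c ∈ R (n + 1) := by
      rw [hR]; exact ⟨c, hc, 0, by simp⟩
    have := hnested n hcR
    rw [hR] at this
    obtain ⟨c', hc', t, rfl⟩ := this
    exact ⟨c', hc', (hQv c' t).symm ▸ rfl⟩
  obtain ⟨p, hp⟩ := IsCompact.nonempty_iInter_of_sequence_nonempty_isCompact_isClosed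
    K hKnested hKne (hKcpt 0) (fun n => (hKcpt n).isClosed)
  refine ⟨p, fun n x hx => ?_⟩
  rw [hR] at hx
  obtain ⟨c, hc, t, rfl⟩ := hx
  have hpn : p ∈ K n := Set.mem_iInter.mp hp n
  obtain ⟨c', hc', hpc'⟩ := hpn
  set α : ℝ := (inner ℝ v₀ (c + t • v₀) : ℝ) / ‖v₀‖ ^ 2 with hα
  have hy : p + α • v₀ ∈ {y | ∃ s : ℝ, y = p + s • v₀} := ⟨α, rfl⟩
  have hle : Metric.infDist (c + t • v₀) {y | ∃ s : ℝ, y = p + s • v₀}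
      ≤ dist (c + t • v₀) (p + α • v₀) := Metric.infDist_le_dist_of_mem hy
  refine hle.trans ?_
  rw [dist_eq_norm]
  have hdiff : (c + t • v₀) - (p + α • v₀) = Q (c - c') := by
    rw [← hpc', ← hQsub, ← hQv c t]
    simp only [hQ, hα]
    abel
  rw [hdiff]
  calc ‖Q (c - c')‖ ≤ ‖c - c'‖ := hQnorm _
    _ = dist c c' := (dist_eq_norm c c').symm
    _ ≤ Metric.diam (C n) := Metric.dist_le_diam_of_mem (hcpt n).isBounded hc hc'
end
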